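/- Let λ be a finite non-increasing sequence of real numbers, viewed as the multiset {λ₁^{r(λ₁)}, …, λ_s^{r(λ_s)}} where λ₁ > ⋯ > λ_s and r(λ_i) denotes the multiplicity of λ_i. Then the shape 𝔭(λ) of the Young tableau obtained by Robinson–Schensted row insertion of λ is the partition [r₁, …, r_s] obtained by sorting the multiplicities r(λ₁), …, r(λ_s) in non-increasing order. -/

import Mathlib

noncomputable section
open scoped Classical

namespace PaperStmt

/-- Row insertion: insert `x` into a (weakly increasing) row, returning the new row
and the bumped entry (if any): the leftmost entry strictly greater than `x` is bumped. -/
def rowInsert (x : ℝ) : List ℝ → List ℝ × Option ℝ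
  | [] => ([x], none)
  | y :: ys =>
    if x < y then (x :: ys, some y)
    else
      let p := rowInsert x ys
      (y :: p.1, p.2)

/-- Insert an entry into a tableau (list of rows) by Robinson–Schensted row insertion. -/
def insertT : List (List ℝ) → ℝ → List (List ℝ)
  | [], x => [[x]]
  | row :: rest, x =>
    match rowInsert x row with
    | (r, none) => r :: rest
    | (r, some y) => r :: insertT rest y

/-- The Robinson–Schensted insertion tableau `P(λ)` of a sequence. -/
def RS (l : List ℝ) : List (List ℝ) := l.foldl insertT []

/-- The shape `𝔭(λ)` of the Robinson–Schensted insertion tableau: the list of row lengths. -/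
def RSshape (l : List ℝ) : List ℕ := (RS l).map List.length

/-- The parts of a multiset of naturals sorted in non-increasing order. -/
def sortDesc (p : Multiset ℕ) : List ℕ := (p.sort (· ≤ ·)).reverse


/-! ### auxiliary machinery -/

def strip : List (List ℝ) → List (List ℝ)
  | [] => []
  | c :: C => if c.tail = [] then [] else c.tail :: strip C

def bumpShape : List ℕ → ℕ → List ℕ
  | [], _ => [1]
  | a :: s, 0 => (a + 1) :: s
  | a :: s, j + 1 => a :: bumpShape s j

def Nice (C : List (List ℝ)) : Prop :=
  (∀ c ∈ C, c ≠ []) ∧ (∀ c ∈ C, c.Pairwise (· < ·)) ∧ C.Pairwise (fun a b => b ⊆ a)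

inductive Rep : List (List ℝ) → List (List ℝ) → Prop
  | nil : Rep [] []
  | cons {T C} (hC : C ≠ []) (h : Rep T (strip C)) : Rep (C.map List.headI :: T) C

-- small list lemmas
lemma headI_cons_tail {α : Type*} [Inhabited α] (c : List α) (h : c ≠ []) :
    c.headI :: c.tail = c := by cases c with
  | nil => simp at h
  | cons a t => rfl

lemma headI_mem {α : Type*} [Inhabited α] {c : List α} (h : c ≠ []) : c.headI ∈ c := by
  cases c with
  | nil => simp at h
  | cons a t => simp

lemma headI_le_of_sorted_mem {c : List ℝ} (hs : c.Pairwise (· < ·)) {v : ℝ} (hv : v ∈ c) :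
    c.headI ≤ v := by
  cases c with
  | nil => simp at hv
  | cons a t =>
    rcases List.mem_cons.1 hv with rfl | h
    · simp
    · exact le_of_lt ((List.pairwise_cons.1 hs).1 v h)

lemma mem_tail_of_sorted {c : List ℝ} (hs : c.Pairwise (· < ·)) {v : ℝ} (hv : v ∈ c)
    (hlt : c.headI < v) : v ∈ c.tail := by
  cases c with
  | nil => simp at hv
  | cons a t =>
    rcases List.mem_cons.1 hv with rfl | h
    · simp at hlt
    · simpa using h

lemma headI_lt_of_mem_tail {c : List ℝ} (hs : c.Pairwise (· < ·)) {v : ℝ} (hv : v ∈ c.tail) :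
    c.headI < v := by
  cases c with
  | nil => simp at hv
  | cons a t => exact (List.pairwise_cons.1 hs).1 v hv

/-! ### rowInsert computations -/

lemma rowInsert_all_le {y : ℝ} : ∀ {r : List ℝ}, (∀ a ∈ r, a ≤ y) →
    rowInsert y r = (r ++ [y], none) := by
  intro r
  induction r with
  | nil => intro _; rfl
  | cons a t ih =>
    intro h
    have ha : ¬ y < a := not_lt.2 (h a (by simp))
    simp only [rowInsert, if_neg ha]
    rw [ih (fun b hb => h b (by simp [hb]))]
    simp

lemma rowInsert_bump {y b : ℝ} (hb : y < b) : ∀ (r₁ r₂ : List ℝ), (∀ a ∈ r₁, a ≤ y) →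
    rowInsert y (r₁ ++ b :: r₂) = (r₁ ++ y :: r₂, some b) := by
  intro r₁
  induction r₁ with
  | nil => intro r₂ _; simp [rowInsert, hb]
  | cons a t ih =>
    intro r₂ h
    have ha : ¬ y < a := not_lt.2 (h a (by simp))
    simp only [List.cons_append, rowInsert, if_neg ha, List.append_eq]
    rw [ih r₂ (fun b hb => h b (by simp [hb]))]

/-! ### strip computations -/

lemma strip_append_singleton (y : ℝ) : ∀ (C : List (List ℝ)),
    strip (C ++ [[y]]) = strip C
  | [] => by simp [strip]
  | c :: C => by
    simp only [List.cons_append, strip, List.append_eq]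
    rw [strip_append_singleton y C]

lemma strip_decomp {C₁ : List (List ℝ)} (h₁ : ∀ d ∈ C₁, d.tail ≠ []) :
    ∀ {c : List ℝ}, c.tail ≠ [] → ∀ (C₂ : List (List ℝ)),
    strip (C₁ ++ c :: C₂) = C₁.map List.tail ++ c.tail :: strip C₂ := by
  induction C₁ with
  | nil => intro c hc C₂; simp [strip, hc]
  | cons d D ih =>
    intro c hc C₂
    have hd : d.tail ≠ [] := h₁ d (by simp)
    simp only [List.cons_append, strip, if_neg hd, List.map_cons, List.append_eq]
    rw [ih (fun e he => h₁ e (by simp [he])) hc]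

lemma strip_decomp_nil {C₁ : List (List ℝ)} (h₁ : ∀ d ∈ C₁, d.tail ≠ []) :
    ∀ {c : List ℝ}, c.tail = [] → ∀ (C₂ : List (List ℝ)),
    strip (C₁ ++ c :: C₂) = C₁.map List.tail := by
  induction C₁ with
  | nil => intro c hc C₂; simp [strip, hc]
  | cons d D ih =>
    intro c hc C₂
    have hd : d.tail ≠ [] := h₁ d (by simp)
    simp only [List.cons_append, strip, if_neg hd, List.map_cons, List.append_eq]
    rw [ih (fun e he => h₁ e (by simp [he])) hc]

lemma mem_strip : ∀ {C : List (List ℝ)} {d : List ℝ}, d ∈ strip C →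
    ∃ e ∈ C, e.tail = d ∧ d ≠ [] := by
  intro C
  induction C with
  | nil => intro d hd; simp [strip] at hd
  | cons c C ih =>
    intro d hd
    by_cases hc : c.tail = []
    · simp [strip, hc] at hd
    · simp only [strip, if_neg hc, List.mem_cons] at hd
      rcases hd with rfl | hd
      · exact ⟨c, by simp, rfl, hc⟩
      · obtain ⟨e, he, h1, h2⟩ := ih hd
        exact ⟨e, by simp [he], h1, h2⟩

lemma tail_subset_tail {c e : List ℝ} (hc : c.Pairwise (· < ·)) (he : e.Pairwise (· < ·))
    (hsub : e ⊆ c) (hne : e ≠ []) : e.tail ⊆ c.tail := by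
  intro v hv
  have hvc : v ∈ c := hsub (List.tail_subset e hv)
  refine mem_tail_of_sorted hc hvc ?_
  have h1 : e.headI < v := headI_lt_of_mem_tail he hv
  have h2 : c.headI ≤ e.headI := headI_le_of_sorted_mem hc (hsub (headI_mem hne))
  exact lt_of_le_of_lt h2 h1

lemma Nice_strip : ∀ {C : List (List ℝ)}, Nice C → Nice (strip C) := by
  intro C
  induction C with
  | nil => intro h; exact h
  | cons c C ih =>
    rintro ⟨hne, hsort, hpw⟩
    by_cases hc : c.tail = []
    · simp only [strip, if_pos hc]
      exact ⟨by simp, by simp, by simp⟩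
    · simp only [strip, if_neg hc]
      have hNC : Nice C := ⟨fun d hd => hne d (by simp [hd]),
        fun d hd => hsort d (by simp [hd]), (List.pairwise_cons.1 hpw).2⟩
      obtain ⟨h1, h2, h3⟩ := ih hNC
      have hcs : c.Pairwise (· < ·) := hsort c (by simp)
      refine ⟨?_, ?_, ?_⟩
      · intro d hd
        rcases List.mem_cons.1 hd with rfl | hd
        · exact hc
        · exact h1 d hd
      · intro d hd
        rcases List.mem_cons.1 hd with rfl | hd
        · exact hcs.tail
        · exact h2 d hd
      · refine List.pairwise_cons.2 ⟨?_, h3⟩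
        intro d hd
        obtain ⟨e, heC, rfl, hdne⟩ := mem_strip hd
        exact tail_subset_tail hcs (hsort e (by simp [heC]))
          ((List.pairwise_cons.1 hpw).1 e heC) (hne e (by simp [heC]))

/-! ### insertion lemmas -/

theorem INS_append {T C : List (List ℝ)} (h : Rep T C) (y : ℝ)
    (hcond : ∀ d ∈ C, d.headI ≤ y) :
    Rep (insertT T y) (C ++ [[y]]) ∧
      (insertT T y).map List.length = bumpShape (T.map List.length) 0 := by
  cases h with
  | nil =>
    constructor
    · have : Rep (([[y]] : List (List ℝ)).map List.headI :: []) [[y]] :=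
        Rep.cons (by simp) (by simp [strip]; exact Rep.nil)
      simpa [insertT] using this
    · simp [insertT, bumpShape]
  | @cons T C hC h =>
    have hrow : rowInsert y (C.map List.headI) = (C.map List.headI ++ [y], none) := by
      refine rowInsert_all_le ?_
      intro a ha
      obtain ⟨d, hd, rfl⟩ := List.mem_map.1 ha
      exact hcond d hd
    have hins : insertT (C.map List.headI :: T) y = (C.map List.headI ++ [y]) :: T := by
      simp [insertT, hrow]
    rw [hins]
    constructor
    · have : (C ++ [[y]]).map List.headI = C.map List.headI ++ [y] := by simp
      rw [← this]
      exact Rep.cons (by simp) (by rw [strip_append_singleton]; exact h)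
    · simp [bumpShape]

theorem INS_bump {T C : List (List ℝ)} (h : Rep T C) :
    ∀ (C₁ C₂ : List (List ℝ)) (c : List ℝ) (y : ℝ), C = C₁ ++ c :: C₂ → Nice C →
    (∀ d ∈ C₁, d.headI ≤ y ∧ y ∈ d) → y < c.headI →
    Rep (insertT T y) (C₁ ++ (y :: c) :: C₂) ∧
      (insertT T y).map List.length = bumpShape (T.map List.length) c.length := by
  induction h with
  | nil =>
    intro C₁ C₂ c y hC _ _ _
    exact absurd hC.symm (by simp)
  | @cons T C hC h ih =>
    intro C₁ C₂ c y hCeq hN hcond hlt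
    subst hCeq
    obtain ⟨hne, hsort, hpw⟩ := hN
    have hpw' := List.pairwise_append.1 hpw
    have hcne : c ≠ [] := hne c (by simp)
    set y' := c.headI with hy'
    have hy'c : y' ∈ c := headI_mem hcne
    have hsub : ∀ d ∈ C₁, c ⊆ d := fun d hd => hpw'.2.2 d hd c (by simp)
    have hy'd : ∀ d ∈ C₁, y' ∈ d.tail := by
      intro d hd
      refine mem_tail_of_sorted (hsort d (by simp [hd])) (hsub d hd hy'c) ?_
      exact lt_of_le_of_lt (hcond d hd).1 hlt
    have htne : ∀ d ∈ C₁, d.tail ≠ [] := fun d hd => List.ne_nil_of_mem (hy'd d hd)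
    have hrow : rowInsert y (C₁.map List.headI ++ c.headI :: C₂.map List.headI) =
        (C₁.map List.headI ++ y :: C₂.map List.headI, some y') := by
      refine rowInsert_bump hlt _ _ ?_
      intro a ha
      obtain ⟨d, hd, rfl⟩ := List.mem_map.1 ha
      exact (hcond d hd).1
    have hins : insertT ((C₁ ++ c :: C₂).map List.headI :: T) y =
        ((C₁ ++ (y :: c) :: C₂).map List.headI) :: insertT T y' := by
      simp only [insertT, List.map_append, List.map_cons, List.headI_cons, hrow]
    have hcond' : ∀ d ∈ C₁.map List.tail, d.headI ≤ y' ∧ y' ∈ d := by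
      intro d hd
      obtain ⟨e, he, rfl⟩ := List.mem_map.1 hd
      exact ⟨headI_le_of_sorted_mem (hsort e (by simp [he])).tail (hy'd e he), hy'd e he⟩
    have hnewne : (C₁ ++ (y :: c) :: C₂ : List (List ℝ)) ≠ [] := by simp
    by_cases htc : c.tail = []
    · -- last cell of the bumping chain: c is a singleton [y']
      have hceq : c = [y'] := by
        conv_lhs => rw [← headI_cons_tail c hcne]
        rw [htc]
      have hstrip : strip (C₁ ++ c :: C₂) = C₁.map List.tail :=
        strip_decomp_nil htne htc C₂
      rw [hstrip] at h
      obtain ⟨hrep2, hshape2⟩ := INS_append h y' (fun d hd => (hcond' d hd).1)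
      have hstripC₂ : strip C₂ = [] := by
        cases C₂ with
        | nil => rfl
        | cons d D =>
          have hdc : d ⊆ c := (List.pairwise_cons.1 hpw'.2.1).1 d (by simp)
          have hdt : d.tail = [] := by
            rw [List.eq_nil_iff_forall_not_mem]
            intro v hv
            have h1 : d.headI < v := headI_lt_of_mem_tail (hsort d (by simp)) hv
            have h2 : d.headI = y' := by
              have := hdc (headI_mem (hne d (by simp)))
              rw [hceq] at this; simpa using this
            have h3 : v = y' := by
              have := hdc (List.tail_subset d hv)
              rw [hceq] at this; simpa using this
            rw [h2, h3] at h1; exact lt_irrefl _ h1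
          simp [strip, hdt]
      have hstrip' : strip (C₁ ++ (y :: c) :: C₂) = C₁.map List.tail ++ [[y']] := by
        rw [strip_decomp htne (by simp [hcne] : (y :: c).tail ≠ []) C₂]
        simp [hstripC₂, hceq]
      constructor
      · rw [hins]
        have : (C₁ ++ (y :: c) :: C₂).map List.headI :: insertT T y' =
            ((C₁ ++ (y :: c) :: C₂).map List.headI) :: insertT T y' := rfl
        refine Rep.cons hnewne ?_
        rw [hstrip']
        exact hrep2
      · rw [hins, hceq]
        simp only [List.map_cons, hshape2]
        simp [bumpShape]
    · -- bump continues to the next row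
      have hstrip : strip (C₁ ++ c :: C₂) = C₁.map List.tail ++ c.tail :: strip C₂ :=
        strip_decomp htne htc C₂
      have hNs : Nice (strip (C₁ ++ c :: C₂)) := Nice_strip ⟨hne, hsort, hpw⟩
      have hlt' : y' < (c.tail).headI :=
        headI_lt_of_mem_tail (hsort c (by simp)) (headI_mem htc)
      obtain ⟨hrep2, hshape2⟩ := ih (C₁.map List.tail) (strip C₂) c.tail y' hstrip hNs hcond' hlt'
      have hstrip' : strip (C₁ ++ (y :: c) :: C₂) = C₁.map List.tail ++ c :: strip C₂ := by
        rw [strip_decomp htne (by simp [hcne] : (y :: c).tail ≠ []) C₂]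
        simp
      constructor
      · rw [hins]
        refine Rep.cons hnewne ?_
        rw [hstrip']
        rw [headI_cons_tail c hcne] at hrep2
        exact hrep2
      · rw [hins]
        have hclen : c.length = c.tail.length + 1 := by
          conv_lhs => rw [← headI_cons_tail c hcne]
          simp
        simp only [List.map_cons, hshape2, hclen]
        simp [bumpShape]

/-! ### sortDesc lemmas -/

lemma sortDesc_sorted (Q : Multiset ℕ) : (sortDesc Q).Pairwise (· ≥ ·) := by
  unfold sortDesc
  rw [List.pairwise_reverse]
  exact (Multiset.pairwise_sort Q (· ≤ ·)).imp (fun h => h)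

lemma sortDesc_coe (Q : Multiset ℕ) : ((sortDesc Q : List ℕ) : Multiset ℕ) = Q := by
  unfold sortDesc
  rw [Multiset.coe_reverse, Multiset.sort_eq]

lemma sortDesc_eq_of {Q : Multiset ℕ} {t : List ℕ} (h1 : t.Pairwise (· ≥ ·))
    (h2 : (t : Multiset ℕ) = Q) : sortDesc Q = t := by
  have hperm : List.Perm (Q.sort (· ≤ ·)) t.reverse := by
    rw [← Multiset.coe_eq_coe, Multiset.coe_reverse, h2, Multiset.sort_eq]
  have hs1 : (Q.sort (· ≤ ·)).Pairwise (· ≤ ·) := Multiset.pairwise_sort _ _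
  have hs2 : t.reverse.Pairwise (· ≤ ·) := by
    rw [List.pairwise_reverse]
    exact h1
  have := List.Perm.eq_of_pairwise' hs1 hs2 hperm
  unfold sortDesc
  rw [this, List.reverse_reverse]

lemma sortDesc_cons_max {Q : Multiset ℕ} {a : ℕ} (h : ∀ b ∈ Q, b ≤ a) :
    sortDesc (a ::ₘ Q) = a :: sortDesc Q := by
  refine sortDesc_eq_of ?_ ?_
  · rw [List.pairwise_cons]
    refine ⟨?_, sortDesc_sorted Q⟩
    intro b hb
    refine h b ?_
    rw [← sortDesc_coe Q]
    exact_mod_cast hb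
  · rw [← Multiset.cons_coe, sortDesc_coe]

lemma sortbump : ∀ (s : List ℕ), s.Pairwise (· ≥ ·) → (∀ a ∈ s, 0 < a) →
    ∀ m : ℕ, (m = 0 ∨ m ∈ s) →
    sortDesc ((m + 1) ::ₘ ((s : Multiset ℕ).erase m)) =
      bumpShape s (s.filter (fun a => decide (m < a))).length := by
  intro s
  induction s with
  | nil =>
    intro _ _ m hm
    have hm0 : m = 0 := by rcases hm with h | h; exact h; simp at h
    subst hm0
    simp [bumpShape]
    refine sortDesc_eq_of (by simp) ?_
    rfl
  | cons a s ih =>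
    intro hs hpos m hm
    have hsa : ∀ b ∈ s, b ≤ a := fun b hb => (List.pairwise_cons.1 hs).1 b hb
    by_cases hma : m < a
    · have hane : a ≠ m := by omega
      have herase : ((a :: s : List ℕ) : Multiset ℕ).erase m = a ::ₘ ((s : Multiset ℕ).erase m) := by
        rw [← Multiset.cons_coe]
        exact Multiset.erase_cons_tail _ hane
      rw [herase, Multiset.cons_swap, sortDesc_cons_max ?hmax]
      case hmax =>
        intro b hb
        rcases Multiset.mem_cons.1 hb with rfl | hb
        · omega
        · exact le_trans (hsa b (by exact_mod_cast Multiset.mem_of_mem_erase hb)) le_rfl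
      have hm' : m = 0 ∨ m ∈ s := by
        rcases hm with h | h
        · exact Or.inl h
        · rcases List.mem_cons.1 h with rfl | h
          · omega
          · exact Or.inr h
      rw [ih (List.pairwise_cons.1 hs).2 (fun b hb => hpos b (by simp [hb])) m hm']
      have hfil : (a :: s).filter (fun b => decide (m < b)) =
          a :: s.filter (fun b => decide (m < b)) := by
        simp [List.filter_cons, hma]
      rw [hfil]
      simp [bumpShape]
    · -- a ≤ m, so m = a
      have hma' : m = a := by
        rcases hm with h | h
        · exact absurd (hpos a (by simp)) (by omega)
        · rcases List.mem_cons.1 h with h' | h'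
          · exact h'
          · have := hsa m h'; omega
      rw [hma']
      have herase : ((a :: s : List ℕ) : Multiset ℕ).erase a = (s : Multiset ℕ) := by
        rw [← Multiset.cons_coe, Multiset.erase_cons_head]
      rw [herase, sortDesc_cons_max ?hmax2]
      case hmax2 =>
        intro b hb
        have : b ≤ a := hsa b (by exact_mod_cast hb)
        omega
      rw [sortDesc_eq_of (List.pairwise_cons.1 hs).2 rfl]
      have hfil : (a :: s).filter (fun b => decide (a < b)) = [] := by
        rw [List.filter_eq_nil_iff]
        intro b hb
        rcases List.mem_cons.1 hb with rfl | hb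
        · simp
        · have := hsa b hb; simp; omega
      rw [hfil]
      simp [bumpShape]

/-! ### counts multiset update -/

lemma cnts_append (l : List ℝ) (x : ℝ) :
    (((l ++ [x]).dedup.map (fun v => (l ++ [x]).count v) : List ℕ) : Multiset ℕ) =
      (l.count x + 1) ::ₘ
        ((l.dedup.map (fun v => l.count v) : List ℕ) : Multiset ℕ).erase (l.count x) := by
  have hcnt : ∀ v : ℝ, v ≠ x → (l ++ [x]).count v = l.count v := by
    intro v hv
    rw [List.count_append]
    simp [List.count_singleton', hv, Ne.symm hv]
  have hcntx : (l ++ [x]).count x = l.count x + 1 := by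
    rw [List.count_append]; simp
  by_cases hx : x ∈ l
  · have hxd : x ∈ l.dedup := List.mem_dedup.2 hx
    have hdperm : List.Perm ((l ++ [x]).dedup) l.dedup := by
      refine (List.perm_ext_iff_of_nodup (List.nodup_dedup _) (List.nodup_dedup _)).2 ?_
      intro v
      simp only [List.mem_dedup, List.mem_append, List.mem_singleton]
      constructor
      · rintro (h | rfl) <;> [exact h; exact hx]
      · exact Or.inl
    have hperm2 : List.Perm l.dedup (x :: l.dedup.erase x) := List.perm_cons_erase hxd
    have hmapcongr : (l.dedup.erase x).map (fun v => (l ++ [x]).count v) =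
        (l.dedup.erase x).map (fun v => l.count v) := by
      refine List.map_congr_left ?_
      intro v hv
      exact hcnt v ((List.Nodup.mem_erase_iff (List.nodup_dedup _)).1 hv).1
    calc (((l ++ [x]).dedup.map (fun v => (l ++ [x]).count v) : List ℕ) : Multiset ℕ)
        = ((l.dedup.map (fun v => (l ++ [x]).count v) : List ℕ) : Multiset ℕ) :=
          Multiset.coe_eq_coe.2 (hdperm.map _)
      _ = (((x :: l.dedup.erase x).map (fun v => (l ++ [x]).count v) : List ℕ) : Multiset ℕ) :=
          Multiset.coe_eq_coe.2 (hperm2.map _)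
      _ = (l.count x + 1) ::ₘ (((l.dedup.erase x).map (fun v => l.count v) : List ℕ) : Multiset ℕ) := by
          rw [List.map_cons, ← Multiset.cons_coe, hcntx, hmapcongr]
      _ = (l.count x + 1) ::ₘ
            ((l.dedup.map (fun v => l.count v) : List ℕ) : Multiset ℕ).erase (l.count x) := by
          congr 1
          have : ((l.dedup.map (fun v => l.count v) : List ℕ) : Multiset ℕ) =
              l.count x ::ₘ (((l.dedup.erase x).map (fun v => l.count v) : List ℕ) : Multiset ℕ) := by
            calc ((l.dedup.map (fun v => l.count v) : List ℕ) : Multiset ℕ)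
                = (((x :: l.dedup.erase x).map (fun v => l.count v) : List ℕ) : Multiset ℕ) :=
                  Multiset.coe_eq_coe.2 (hperm2.map _)
              _ = _ := by rw [List.map_cons, ← Multiset.cons_coe]
          rw [this, Multiset.erase_cons_head]
  · have hcx : l.count x = 0 := List.count_eq_zero.2 hx
    have hxd : x ∉ l.dedup := fun h => hx (List.mem_dedup.1 h)
    have hdperm : List.Perm ((l ++ [x]).dedup) (x :: l.dedup) := by
      refine (List.perm_ext_iff_of_nodup (List.nodup_dedup _) ?_).2 ?_
      · exact List.nodup_cons.2 ⟨hxd, List.nodup_dedup _⟩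
      · intro v
        simp only [List.mem_dedup, List.mem_append, List.mem_singleton, List.mem_cons]
        tauto
    have hmapcongr : l.dedup.map (fun v => (l ++ [x]).count v) =
        l.dedup.map (fun v => l.count v) := by
      refine List.map_congr_left ?_
      intro v hv
      exact hcnt v (fun h => hxd (h ▸ hv))
    have herase : ((l.dedup.map (fun v => l.count v) : List ℕ) : Multiset ℕ).erase 0 =
        ((l.dedup.map (fun v => l.count v) : List ℕ) : Multiset ℕ) := by
      refine Multiset.erase_of_notMem ?_
      intro h0
      rw [Multiset.mem_coe, List.mem_map] at h0
      obtain ⟨v, hv, hv0⟩ := h0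
      have : v ∈ l := List.mem_dedup.1 hv
      have := List.count_pos_iff.2 this
      omega
    rw [hcx, herase]
    calc (((l ++ [x]).dedup.map (fun v => (l ++ [x]).count v) : List ℕ) : Multiset ℕ)
        = (((x :: l.dedup).map (fun v => (l ++ [x]).count v) : List ℕ) : Multiset ℕ) :=
          Multiset.coe_eq_coe.2 (hdperm.map _)
      _ = (0 + 1) ::ₘ ((l.dedup.map (fun v => l.count v) : List ℕ) : Multiset ℕ) := by
          rw [List.map_cons, ← Multiset.cons_coe, hcntx, hcx, hmapcongr]

/-! ### column invariant -/

def Inv (l : List ℝ) (C : List (List ℝ)) : Prop :=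
  ∀ (k : ℕ) (v : ℝ), v ∈ C.getD k [] ↔ (v ∈ l ∧ k < l.count v)

lemma Inv.pairwise {l : List ℝ} {C : List (List ℝ)} (h : Inv l C) :
    C.Pairwise (fun a b => b ⊆ a) := by
  rw [List.pairwise_iff_getElem]
  intro i j hi hj hij v hv
  have h1 : v ∈ C.getD j [] := by rw [List.getD_eq_getElem _ _ hj]; exact hv
  have h2 := (h j v).1 h1
  have h3 : v ∈ C.getD i [] := (h i v).2 ⟨h2.1, by omega⟩
  rw [List.getD_eq_getElem _ _ hi] at h3; exact h3

lemma getD_take' (C : List (List ℝ)) {m k : ℕ} (h : k < m) :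
    (C.take m).getD k [] = C.getD k [] := by
  simp only [List.getD_eq_getElem?_getD, List.getElem?_take_of_lt h]

lemma getD_drop' (C : List (List ℝ)) (m k : ℕ) :
    (C.drop m).getD k [] = C.getD (m + k) [] := by
  simp only [List.getD_eq_getElem?_getD, List.getElem?_drop]

theorem MAIN : ∀ (l : List ℝ), l.Pairwise (· ≥ ·) →
    ∃ C, Rep (RS l) C ∧ Nice C ∧ Inv l C ∧
      RSshape l = sortDesc ((l.dedup.map (fun x => l.count x) : List ℕ) : Multiset ℕ) := by
  intro l
  induction l using List.reverseRecOn with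
  | nil =>
    intro _
    refine ⟨[], ?_, ⟨by simp, by simp, by simp⟩, ?_, ?_⟩
    · exact Rep.nil
    · intro k v; simp
    · simp [RSshape, RS, sortDesc]
  | append_singleton l x ih =>
    intro hl
    have hl' : l.Pairwise (· ≥ ·) := (List.pairwise_append.1 hl).1
    have hxle : ∀ v ∈ l, x ≤ v := fun v hv => (List.pairwise_append.1 hl).2.2 v hv x (by simp)
    obtain ⟨C, hRep, hNice, hInv, hShape⟩ := ih hl'
    obtain ⟨hne, hsort, _⟩ := hNice
    set m := l.count x with hm
    have hRS : RS (l ++ [x]) = insertT (RS l) x := by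
      rw [RS, List.foldl_append]; rfl
    have hcnt' : ∀ v : ℝ, (l ++ [x]).count v = if v = x then m + 1 else l.count v := by
      intro v
      rw [List.count_append]
      by_cases hv : v = x
      · subst hv; simp [hm]
      · simp [List.count_singleton', hv, Ne.symm hv]
    have hmle : m ≤ C.length := by
      rcases Nat.eq_zero_or_pos m with h0 | h0
      · omega
      · have hxl : x ∈ l := List.count_pos_iff.1 (by omega)
        have hmm : x ∈ C.getD (m - 1) [] := (hInv (m - 1) x).2 ⟨hxl, by omega⟩
        by_contra hcon
        rw [List.getD_eq_default _ _ (by omega)] at hmm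
        simp at hmm
    have hP := sortbump (sortDesc ((l.dedup.map (fun v => l.count v) : List ℕ) : Multiset ℕ))
      (sortDesc_sorted _) ?hpos m ?hm0
    case hpos =>
      intro a ha
      have hmem : a ∈ ((l.dedup.map (fun v => l.count v) : List ℕ) : Multiset ℕ) := by
        rw [← sortDesc_coe ((l.dedup.map (fun v => l.count v) : List ℕ) : Multiset ℕ)]
        exact_mod_cast ha
      rw [Multiset.mem_coe, List.mem_map] at hmem
      obtain ⟨v, hv, rfl⟩ := hmem
      exact List.count_pos_iff.2 (List.mem_dedup.1 hv)
    case hm0 =>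
      rcases Nat.eq_zero_or_pos m with h0 | h0
      · exact Or.inl h0
      · refine Or.inr ?_
        have hxl : x ∈ l := List.count_pos_iff.1 (by omega)
        have hmem : m ∈ ((l.dedup.map (fun v => l.count v) : List ℕ) : Multiset ℕ) := by
          rw [Multiset.mem_coe, List.mem_map]
          exact ⟨x, List.mem_dedup.2 hxl, hm.symm⟩
        rw [← sortDesc_coe ((l.dedup.map (fun v => l.count v) : List ℕ) : Multiset ℕ),
          Multiset.mem_coe] at hmem
        exact hmem
    rw [sortDesc_coe] at hP
    have hfillen : ((sortDesc ((l.dedup.map (fun v => l.count v) : List ℕ) : Multiset ℕ)).filter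
        (fun a => decide (m < a))).length =
        (l.dedup.filter (fun v => decide (m < l.count v))).length := by
      have hperm : List.Perm
          (sortDesc ((l.dedup.map (fun v => l.count v) : List ℕ) : Multiset ℕ))
          (l.dedup.map (fun v => l.count v)) :=
        Multiset.coe_eq_coe.1 (by rw [sortDesc_coe])
      rw [(hperm.filter _).length_eq, List.filter_map, List.length_map]
      rfl
    by_cases hcase : m < C.length
    · -- bump case
      set c := C.getD m [] with hc
      have hcC : c ∈ C := by rw [hc, List.getD_eq_getElem _ _ hcase]; exact List.getElem_mem _
      have hcne : c ≠ [] := hne c hcC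
      have hdecomp : C = C.take m ++ c :: C.drop (m + 1) := by
        conv_lhs => rw [← List.take_append_drop m C]
        congr 1
        rw [List.drop_eq_getElem_cons hcase]
        congr 1
        rw [hc, List.getD_eq_getElem _ _ hcase]
      have hcond : ∀ d ∈ C.take m, d.headI ≤ x ∧ x ∈ d := by
        intro d hd
        obtain ⟨k, hk, hdk⟩ := List.mem_iff_getElem.1 hd
        have hk' : k < m := lt_of_lt_of_le hk (by rw [List.length_take]; exact min_le_left _ _)
        have h1 : (C.take m).getD k [] = C.getD k [] := getD_take' C hk'
        rw [List.getD_eq_getElem _ _ hk, hdk] at h1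
        have hxl : x ∈ l := List.count_pos_iff.1 (by omega)
        have hxd : x ∈ d := by rw [h1]; exact (hInv k x).2 ⟨hxl, hk'⟩
        exact ⟨headI_le_of_sorted_mem (hsort d (List.take_subset _ _ hd)) hxd, hxd⟩
      have hlt : x < c.headI := by
        have hmem : c.headI ∈ C.getD m [] := by rw [← hc]; exact headI_mem hcne
        have h2 := (hInv m c.headI).1 (by rw [← hc] at hmem; rw [hc] at hmem; exact hmem)
        have hnex : x ≠ c.headI := by
          intro he; rw [← he] at h2; omega
        exact lt_of_le_of_ne (hxle c.headI h2.1) hnex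
      obtain ⟨hR, hSh⟩ := INS_bump hRep (C.take m) (C.drop (m + 1)) c x hdecomp
        ⟨hne, hsort, hInv.pairwise⟩ hcond hlt
      have hlen_take : (C.take m).length = m := by rw [List.length_take]; omega
      have hgdlt : ∀ k, k < m →
          (C.take m ++ (x :: c) :: C.drop (m + 1)).getD k [] = C.getD k [] := by
        intro k hk
        rw [List.getD_append _ _ _ _ (by omega), getD_take' C hk]
      have hgdeq : (C.take m ++ (x :: c) :: C.drop (m + 1)).getD m [] = x :: c := by
        rw [List.getD_append_right _ _ _ _ (by omega), hlen_take]
        simp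
      have hgdgt : ∀ k, m < k →
          (C.take m ++ (x :: c) :: C.drop (m + 1)).getD k [] = C.getD k [] := by
        intro k hk
        rw [List.getD_append_right _ _ _ _ (by omega), hlen_take]
        have h1 : k - m = (k - m - 1) + 1 := by omega
        rw [h1, List.getD_cons_succ, getD_drop']
        congr 1
        omega
      have hInv' : Inv (l ++ [x]) (C.take m ++ (x :: c) :: C.drop (m + 1)) := by
        intro k v
        rcases lt_trichotomy k m with hk | hk | hk
        · rw [hgdlt k hk, hInv k v, List.mem_append, hcnt' v]
          by_cases hv : v = x
          · rw [hv, if_pos rfl, ← hm]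
            have hxl : x ∈ l := List.count_pos_iff.1 (by omega)
            constructor
            · rintro ⟨h1, _⟩; exact ⟨Or.inl h1, by omega⟩
            · intro _; exact ⟨hxl, hk⟩
          · rw [if_neg hv]
            constructor
            · rintro ⟨h1, h2⟩; exact ⟨Or.inl h1, h2⟩
            · rintro ⟨h1, h2⟩
              exact ⟨h1.resolve_right (fun hh => hv (List.mem_singleton.1 hh)), h2⟩
        · rw [hk, hgdeq, List.mem_append, hcnt' v]
          have hInvm := hInv m v
          rw [← hc] at hInvm
          by_cases hv : v = x
          · rw [hv, if_pos rfl]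
            constructor
            · intro _; exact ⟨Or.inr (by simp), by omega⟩
            · intro _; exact List.mem_cons_self
          · rw [if_neg hv]
            constructor
            · intro hmm
              rcases List.mem_cons.1 hmm with h | h
              · exact absurd h hv
              · obtain ⟨h1, h2⟩ := hInvm.1 h
                exact ⟨Or.inl h1, h2⟩
            · rintro ⟨h1, h2⟩
              exact List.mem_cons_of_mem _ (hInvm.2
                ⟨h1.resolve_right (fun hh => hv (List.mem_singleton.1 hh)), h2⟩)
        · rw [hgdgt k hk, hInv k v, List.mem_append, hcnt' v]
          by_cases hv : v = x
          · rw [hv, if_pos rfl, ← hm]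
            constructor
            · rintro ⟨_, h2⟩; omega
            · rintro ⟨_, h2⟩; omega
          · rw [if_neg hv]
            constructor
            · rintro ⟨h1, h2⟩; exact ⟨Or.inl h1, h2⟩
            · rintro ⟨h1, h2⟩
              exact ⟨h1.resolve_right (fun hh => hv (List.mem_singleton.1 hh)), h2⟩
      have hNice' : Nice (C.take m ++ (x :: c) :: C.drop (m + 1)) := by
        refine ⟨?_, ?_, hInv'.pairwise⟩
        · intro d hd
          rcases List.mem_append.1 hd with hd | hd
          · exact hne d (List.take_subset _ _ hd)
          · rcases List.mem_cons.1 hd with rfl | hd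
            · simp
            · exact hne d (List.drop_subset _ _ hd)
        · intro d hd
          rcases List.mem_append.1 hd with hd | hd
          · exact hsort d (List.take_subset _ _ hd)
          · rcases List.mem_cons.1 hd with rfl | hd
            · rw [List.pairwise_cons]
              refine ⟨?_, hsort c hcC⟩
              intro v hv
              have hInvm := hInv m v
              rw [← hc] at hInvm
              obtain ⟨h1, h2⟩ := hInvm.1 hv
              have hnex : x ≠ v := by intro he; rw [← he] at h2; omega
              exact lt_of_le_of_ne (hxle v h1) hnex
            · exact hsort d (List.drop_subset _ _ hd)
      refine ⟨C.take m ++ (x :: c) :: C.drop (m + 1), by rw [hRS]; exact hR, hNice', hInv', ?_⟩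
      rw [RSshape, hRS, hSh]
      rw [show (RS l).map List.length = RSshape l from rfl, hShape]
      rw [cnts_append, ← hm, hP, hfillen]
      congr 1
      have hnodc : c.Nodup := (hsort c hcC).imp (fun h => ne_of_lt h)
      have hnodf : (l.dedup.filter (fun v => decide (m < l.count v))).Nodup :=
        (List.nodup_dedup l).filter _
      have hpm : List.Perm (l.dedup.filter (fun v => decide (m < l.count v))) c := by
        refine (List.perm_ext_iff_of_nodup hnodf hnodc).2 ?_
        intro v
        have hInvm := hInv m v
        rw [← hc] at hInvm
        rw [List.mem_filter, List.mem_dedup, hInvm]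
        simp
      exact hpm.length_eq.symm
    · -- append case : m = C.length
      have hmeq : m = C.length := by omega
      have hcond : ∀ d ∈ C, d.headI ≤ x := by
        intro d hd
        obtain ⟨k, hk, hdk⟩ := List.mem_iff_getElem.1 hd
        have hk' : k < m := by omega
        have hxl : x ∈ l := List.count_pos_iff.1 (by omega)
        have hxd : x ∈ d := by
          rw [← hdk, ← List.getD_eq_getElem _ _ hk]
          exact (hInv k x).2 ⟨hxl, hk'⟩
        exact headI_le_of_sorted_mem (hsort d hd) hxd
      obtain ⟨hR, hSh⟩ := INS_append hRep x hcond
      have hgdlt : ∀ k, k < m → (C ++ [[x]]).getD k [] = C.getD k [] := by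
        intro k hk
        rw [List.getD_append _ _ _ _ (by omega)]
      have hgdeq : (C ++ [[x]]).getD m [] = [x] := by
        rw [List.getD_append_right _ _ _ _ (by omega), hmeq]
        simp
      have hgdgt : ∀ k, m < k → (C ++ [[x]]).getD k [] = [] := by
        intro k hk
        rw [List.getD_eq_default]
        rw [List.length_append]
        simp
        omega
      have hInv' : Inv (l ++ [x]) (C ++ [[x]]) := by
        intro k v
        rcases lt_trichotomy k m with hk | hk | hk
        · rw [hgdlt k hk, hInv k v, List.mem_append, hcnt' v]
          by_cases hv : v = x
          · rw [hv, if_pos rfl, ← hm]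
            have hxl : x ∈ l := List.count_pos_iff.1 (by omega)
            constructor
            · rintro ⟨h1, _⟩; exact ⟨Or.inl h1, by omega⟩
            · intro _; exact ⟨hxl, hk⟩
          · rw [if_neg hv]
            constructor
            · rintro ⟨h1, h2⟩; exact ⟨Or.inl h1, h2⟩
            · rintro ⟨h1, h2⟩
              exact ⟨h1.resolve_right (fun hh => hv (List.mem_singleton.1 hh)), h2⟩
        · rw [hk, hgdeq, List.mem_append, hcnt' v]
          by_cases hv : v = x
          · rw [hv, if_pos rfl]
            constructor
            · intro _; exact ⟨Or.inr (by simp), by omega⟩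
            · intro _; simp
          · rw [if_neg hv]
            constructor
            · intro h; exact absurd (List.mem_singleton.1 h) hv
            · rintro ⟨h1, h2⟩
              have hmm : v ∈ C.getD m [] := (hInv m v).2
                ⟨h1.resolve_right (fun hh => hv (List.mem_singleton.1 hh)), h2⟩
              rw [List.getD_eq_default _ _ (by omega)] at hmm
              simp at hmm
        · rw [hgdgt k hk, List.mem_append, hcnt' v]
          by_cases hv : v = x
          · rw [hv, if_pos rfl]
            simp
            omega
          · rw [if_neg hv]
            simp only [List.not_mem_nil, false_iff, not_and]
            intro h1 h2
            have hmm : v ∈ C.getD k [] := (hInv k v).2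
              ⟨h1.resolve_right (fun hh => hv (List.mem_singleton.1 hh)), h2⟩
            rw [List.getD_eq_default _ _ (by omega)] at hmm
            simp at hmm
      have hNice' : Nice (C ++ [[x]]) := by
        refine ⟨?_, ?_, hInv'.pairwise⟩
        · intro d hd
          rcases List.mem_append.1 hd with hd | hd
          · exact hne d hd
          · rcases List.mem_cons.1 hd with rfl | hd
            · simp
            · simp at hd
        · intro d hd
          rcases List.mem_append.1 hd with hd | hd
          · exact hsort d hd
          · rcases List.mem_cons.1 hd with rfl | hd
            · simp
            · simp at hd
      refine ⟨C ++ [[x]], by rw [hRS]; exact hR, hNice', hInv', ?_⟩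
      rw [RSshape, hRS, hSh]
      rw [show (RS l).map List.length = RSshape l from rfl, hShape]
      rw [cnts_append, ← hm, hP, hfillen]
      congr 1
      symm
      rw [List.length_eq_zero_iff, List.filter_eq_nil_iff]
      intro v hv
      simp only [decide_eq_true_eq, not_lt]
      by_contra hcon
      have hmm : v ∈ C.getD m [] := (hInv m v).2 ⟨List.mem_dedup.1 hv, by omega⟩
      rw [List.getD_eq_default _ _ (by omega)] at hmm
      simp at hmm

/-- for a non-increasing sequence `λ`, the shape of its
Robinson–Schensted tableau is the partition obtained by sorting the multiplicities of the
distinct values of `λ` in non-increasing order. -/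
theorem RSshape_of_antitone (l : List ℝ) (hl : l.Pairwise (· ≥ ·)) :
    RSshape l = sortDesc ((l.dedup.map (fun x => l.count x) : List ℕ) : Multiset ℕ) := by
  obtain ⟨C, _, _, _, h⟩ := MAIN l hl
  exact h

end PaperStmt
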